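/- Let p ≥ 1 and n ≥ 0 be integers, A a p×p real matrix, Σ_w and Σ_{x₀} p×p real positive definite matrices, and D > 0. Define δ_n = λ_max(Σ_{x₀})/(n+1) and ε_n = (1/(n+1))·[ (p/2)·log( (λ_max(A·Aᵀ)·D + trace(Σ_w)) / p ) − (1/2)·log det Σ_{x₀} ]. Let P₀, …, P_n be p×p real positive definite matrices satisfying P₀ ⪯ Σ_{x₀}, P_t ⪯ A·P_{t−1}·Aᵀ + Σ_w for t = 1, …, n, and trace(P_t) ≤ D for t = 0, …, n, and set P̄ = (1/(n+1))·∑_{t=0}^{n} P_t. Then: (i) P̄ is positive definite, trace(P̄) ≤ D, and P̄ ⪯ A·P̄·Aᵀ + Σ_w + δ_n·I_p; and (ii) (1/(n+1))·[ (1/2)·log det Σ_{x₀} − (1/2)·log det P₀ + ∑_{t=1}^{n} ( (1/2)·log det(A·P_{t−1}·Aᵀ + Σ_w) − (1/2)·log det P_t ) ] ≥ (1/2)·log det(A·P̄·Aᵀ + Σ_w) − (1/2)·log det P̄ − ε_n. -/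

import Mathlib

open Matrix Finset

/-- The largest eigenvalue of a Hermitian real matrix. -/
noncomputable def eigMax {p : ℕ} (M : Matrix (Fin p) (Fin p) ℝ) (hM : M.IsHermitian) : ℝ :=
  ⨆ i, hM.eigenvalues i

lemma isHermitian_mul_transpose_self_real {p : ℕ} (A : Matrix (Fin p) (Fin p) ℝ) :
    (A * Aᵀ).IsHermitian := by
  rw [← conjTranspose_eq_transpose_of_trivial]
  exact isHermitian_mul_conjTranspose_self A

section Helpers

variable {p : ℕ}

lemma trace_eq_sum_eig {M : Matrix (Fin p) (Fin p) ℝ} (hM : M.IsHermitian) :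
    M.trace = ∑ i, hM.eigenvalues i := by
  nth_rewrite 1 [hM.spectral_theorem]
  rw [Unitary.conjStarAlgAut_apply, Matrix.trace_mul_cycle]
  rw [mem_unitaryGroup_iff'.mp (hM.eigenvectorUnitary).2, Matrix.one_mul]
  simp [Matrix.trace_diagonal]

lemma det_eq_prod_eig {M : Matrix (Fin p) (Fin p) ℝ} (hM : M.IsHermitian) :
    M.det = ∏ i, hM.eigenvalues i := by
  simpa using hM.det_eq_prod_eigenvalues

lemma psd_trace_nonneg {M : Matrix (Fin p) (Fin p) ℝ} (hM : M.PosSemidef) :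
    0 ≤ M.trace := by
  rw [trace_eq_sum_eig hM.1]
  exact Finset.sum_nonneg fun i _ => hM.eigenvalues_nonneg i

lemma logdet_le_trace_sub {Y : Matrix (Fin p) (Fin p) ℝ} (hY : Y.PosDef) :
    Real.log Y.det ≤ Y.trace - p := by
  rw [det_eq_prod_eig hY.1, trace_eq_sum_eig hY.1]
  rw [Real.log_prod (fun i _ => (hY.eigenvalues_pos i).ne')]
  have h : ∀ i ∈ Finset.univ (α := Fin p), Real.log (hY.1.eigenvalues i) ≤ hY.1.eigenvalues i - 1 :=
    fun i _ => Real.log_le_sub_one_of_pos (hY.eigenvalues_pos i)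
  calc ∑ i, Real.log (hY.1.eigenvalues i) ≤ ∑ i, (hY.1.eigenvalues i - 1) := Finset.sum_le_sum h
    _ = (∑ i, hY.1.eigenvalues i) - p := by rw [Finset.sum_sub_distrib]; simp

lemma psd_smul {M : Matrix (Fin p) (Fin p) ℝ} (hM : M.PosSemidef) {c : ℝ} (hc : 0 ≤ c) :
    (c • M).PosSemidef := by
  refine Matrix.PosSemidef.of_dotProduct_mulVec_nonneg ?_ (fun x => ?_)
  · unfold Matrix.IsHermitian
    rw [conjTranspose_smul, hM.1]
    simp
  · rw [smul_mulVec, dotProduct_smul, smul_eq_mul]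
    exact mul_nonneg hc (hM.dotProduct_mulVec_nonneg x)

lemma pd_smul {M : Matrix (Fin p) (Fin p) ℝ} (hM : M.PosDef) {c : ℝ} (hc : 0 < c) :
    (c • M).PosDef := by
  refine Matrix.PosDef.of_dotProduct_mulVec_pos ?_ (fun x hx => ?_)
  · unfold Matrix.IsHermitian
    rw [conjTranspose_smul, hM.1]
    simp
  · rw [smul_mulVec, dotProduct_smul, smul_eq_mul]
    exact mul_pos hc (hM.dotProduct_mulVec_pos hx)

lemma pd_of_psd_det_ne {M : Matrix (Fin p) (Fin p) ℝ} (hM : M.PosSemidef)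
    (hd : M.det ≠ 0) : M.PosDef := by
  refine Matrix.PosDef.of_dotProduct_mulVec_pos hM.1 (fun x hx => ?_)
  rcases lt_or_eq_of_le (hM.dotProduct_mulVec_nonneg x) with h | h
  · exact h
  · exfalso
    have h0 : M *ᵥ x = 0 := (hM.dotProduct_mulVec_zero_iff x).mp h.symm
    have hinj : Function.Injective (M.mulVec) :=
      Matrix.mulVec_injective_iff_isUnit.mpr ((Matrix.isUnit_iff_isUnit_det M).mpr hd.isUnit)
    exact hx (hinj (by simpa using h0))

lemma psd_sum {s : Finset ℕ} (f : ℕ → Matrix (Fin p) (Fin p) ℝ)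
    (h : ∀ i ∈ s, (f i).PosSemidef) : (∑ i ∈ s, f i).PosSemidef := by
  classical
  induction s using Finset.induction_on with
  | empty => simpa using Matrix.PosSemidef.zero
  | insert a s' hni ih =>
    rw [Finset.sum_insert hni]
    exact (h a (Finset.mem_insert_self a s')).add (ih fun i hi => h i (Finset.mem_insert_of_mem hi))

open scoped MatrixOrder in
lemma logdet_le_key {X S : Matrix (Fin p) (Fin p) ℝ} (hX : X.PosDef) (hS : S.PosDef) :
    Real.log X.det ≤ (S * X).trace - Real.log S.det - p := by
  set R := CFC.sqrt S with hR
  have hRh : R.PosSemidef := (CFC.sqrt_nonneg S).posSemidef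
  have hRR : R * R = S := CFC.sqrt_mul_sqrt_self S hS.posSemidef.nonneg
  have hY : (R * X * R).PosSemidef := by
    have := hX.posSemidef.mul_mul_conjTranspose_same R
    rwa [hRh.1.eq] at this
  have hdet : (R * X * R).det = S.det * X.det := by
    rw [det_mul, det_mul]
    rw [show R.det * X.det * R.det = R.det * R.det * X.det by ring, ← det_mul, hRR]
  have hYpd : (R * X * R).PosDef := pd_of_psd_det_ne hY (by
    rw [hdet]; exact (mul_pos hS.det_pos hX.det_pos).ne')
  have htr : (R * X * R).trace = (S * X).trace := by
    rw [Matrix.trace_mul_cycle, hRR]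
  have h := logdet_le_trace_sub hYpd
  rw [hdet, htr, Real.log_mul hS.det_pos.ne' hX.det_pos.ne'] at h
  linarith

open scoped MatrixOrder in
lemma trace_mul_psd_nonneg {S T : Matrix (Fin p) (Fin p) ℝ} (hS : S.PosSemidef)
    (hT : T.PosSemidef) : 0 ≤ (S * T).trace := by
  have hRR : CFC.sqrt S * CFC.sqrt S = S := CFC.sqrt_mul_sqrt_self S hS.nonneg
  have h1 : (CFC.sqrt S * T * CFC.sqrt S).PosSemidef := by
    have := hT.mul_mul_conjTranspose_same (CFC.sqrt S)
    rwa [(CFC.sqrt_nonneg S).posSemidef.1.eq] at this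
  have h2 : (CFC.sqrt S * T * CFC.sqrt S).trace = (S * T).trace := by
    rw [Matrix.trace_mul_cycle, hRR]
  rw [← h2]
  exact psd_trace_nonneg h1

lemma logdet_mono {X Y : Matrix (Fin p) (Fin p) ℝ} (hX : X.PosDef) (hY : Y.PosDef)
    (hle : (Y - X).PosSemidef) : Real.log X.det ≤ Real.log Y.det := by
  have h1 := logdet_le_key hX hY.inv
  have h2 : 0 ≤ (Y⁻¹ * (Y - X)).trace := trace_mul_psd_nonneg hY.inv.posSemidef hle
  rw [Matrix.mul_sub, trace_sub, Matrix.nonsing_inv_mul Y hY.det_pos.ne'.isUnit] at h2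
  have htr1 : (1 : Matrix (Fin p) (Fin p) ℝ).trace = (p : ℝ) := by simp
  have h3 : (Y⁻¹ * X).trace ≤ (p : ℝ) := by rw [htr1] at h2; linarith
  have h4 : Real.log Y⁻¹.det = - Real.log Y.det := by
    rw [det_nonsing_inv, Ring.inverse_eq_inv', Real.log_inv]
  linarith

lemma le_eigMax_smul_one {M : Matrix (Fin p) (Fin p) ℝ} (hM : M.IsHermitian) :
    ((⨆ i, hM.eigenvalues i) • (1 : Matrix (Fin p) (Fin p) ℝ) - M).PosSemidef := by
  rcases Nat.eq_zero_or_pos p with h0 | hpos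
  · subst h0
    constructor
    · unfold Matrix.IsHermitian; ext i j; exact absurd i.2 (by omega)
    · intro x; simp [Subsingleton.elim x 0]
  set μ := ⨆ i, hM.eigenvalues i with hμ
  have hle : ∀ i, hM.eigenvalues i ≤ μ := fun i =>
    le_ciSup (Set.Finite.bddAbove (Set.finite_range _)) i
  set U := (hM.eigenvectorUnitary : Matrix (Fin p) (Fin p) ℝ) with hU
  have hUU : U * star U = 1 := mem_unitaryGroup_iff.mp hM.eigenvectorUnitary.2
  have key : μ • (1 : Matrix (Fin p) (Fin p) ℝ) - M
      = U * (Matrix.diagonal (fun i => μ - hM.eigenvalues i)) * star U := by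
    have h1 : μ • (1 : Matrix (Fin p) (Fin p) ℝ) = U * (μ • 1) * star U := by
      rw [Matrix.mul_smul, Matrix.mul_one, Matrix.smul_mul, hUU]
    have h2 : M = U * Matrix.diagonal (RCLike.ofReal ∘ hM.eigenvalues) * star U :=
      hM.spectral_theorem
    calc μ • (1 : Matrix (Fin p) (Fin p) ℝ) - M
        = U * (μ • 1) * star U - U * Matrix.diagonal (RCLike.ofReal ∘ hM.eigenvalues) * star U := by
          rw [← h1, ← h2]
      _ = U * ((μ • 1) - Matrix.diagonal (RCLike.ofReal ∘ hM.eigenvalues)) * star U := by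
          rw [Matrix.mul_sub, Matrix.sub_mul]
      _ = U * (Matrix.diagonal (fun i => μ - hM.eigenvalues i)) * star U := ?_
    congr 2
    ext i j
    by_cases hij : i = j <;>
      simp [Matrix.diagonal, hij, Matrix.one_apply, Matrix.sub_apply, Matrix.smul_apply]
  rw [key]
  have hdiag : (Matrix.diagonal (fun i => μ - hM.eigenvalues i)).PosSemidef :=
    Matrix.PosSemidef.diagonal (fun i => sub_nonneg.mpr (hle i))
  have h5 := hdiag.mul_mul_conjTranspose_same U
  rwa [show Uᴴ = star U from rfl] at h5

lemma quad_form_eq (μ : ℝ) (y : Fin p → ℝ) (B : Matrix (Fin p) (Fin p) ℝ) :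
    y ⬝ᵥ ((μ • (1 : Matrix (Fin p) (Fin p) ℝ) - B * Bᵀ) *ᵥ y)
      = μ * (y ⬝ᵥ y) - (Bᵀ *ᵥ y) ⬝ᵥ (Bᵀ *ᵥ y) := by
  rw [sub_mulVec, dotProduct_sub, smul_mulVec, one_mulVec, dotProduct_smul, smul_eq_mul,
    ← Matrix.mulVec_mulVec, Matrix.dotProduct_mulVec, ← Matrix.mulVec_transpose]

lemma transpose_mul_self_le {A : Matrix (Fin p) (Fin p) ℝ} {μ : ℝ} (hμ : 0 ≤ μ)
    (h : (μ • (1 : Matrix (Fin p) (Fin p) ℝ) - A * Aᵀ).PosSemidef) :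
    (μ • (1 : Matrix (Fin p) (Fin p) ℝ) - Aᵀ * A).PosSemidef := by
  have hherm : (Aᵀ * A).IsHermitian := by
    have := Matrix.isHermitian_conjTranspose_mul_self A
    rwa [conjTranspose_eq_transpose_of_trivial] at this
  refine Matrix.PosSemidef.of_dotProduct_mulVec_nonneg ?_ ?_
  · unfold Matrix.IsHermitian
    rw [conjTranspose_sub, conjTranspose_smul, conjTranspose_one, hherm.eq]
    simp
  intro x
  rw [star_trivial]
  have g1 := quad_form_eq μ x Aᵀ
  rw [transpose_transpose] at g1
  rw [g1]
  have hq2 := h.dotProduct_mulVec_nonneg (A *ᵥ x)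
  rw [star_trivial, quad_form_eq μ (A *ᵥ x) A] at hq2
  have hxw : x ⬝ᵥ (Aᵀ *ᵥ (A *ᵥ x)) = (A *ᵥ x) ⬝ᵥ (A *ᵥ x) := by
    rw [Matrix.dotProduct_mulVec, Matrix.vecMul_transpose]
  have hcs : (x ⬝ᵥ (Aᵀ *ᵥ (A *ᵥ x))) ^ 2
      ≤ (x ⬝ᵥ x) * ((Aᵀ *ᵥ (A *ᵥ x)) ⬝ᵥ (Aᵀ *ᵥ (A *ᵥ x))) := by
    have := Finset.sum_mul_sq_le_sq_mul_sq Finset.univ x (Aᵀ *ᵥ (A *ᵥ x))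
    simpa [dotProduct, pow_two] using this
  have hs : 0 ≤ (A *ᵥ x) ⬝ᵥ (A *ᵥ x) := Finset.sum_nonneg fun i _ => mul_self_nonneg _
  have hx2 : 0 ≤ x ⬝ᵥ x := Finset.sum_nonneg fun i _ => mul_self_nonneg _
  rcases eq_or_lt_of_le hs with h0 | h0
  · rw [← h0]
    simpa using mul_nonneg hμ hx2
  · nlinarith [hcs, hxw, h0, hx2, hμ, hq2]

lemma trace_conj_le {A P : Matrix (Fin p) (Fin p) ℝ} {μ : ℝ} (hP : P.PosSemidef)
    (h : (μ • (1 : Matrix (Fin p) (Fin p) ℝ) - Aᵀ * A).PosSemidef) :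
    (A * P * Aᵀ).trace ≤ μ * P.trace := by
  have h0 := trace_mul_psd_nonneg h hP
  rw [Matrix.sub_mul, trace_sub, Matrix.smul_mul, Matrix.one_mul, trace_smul] at h0
  rw [(Matrix.trace_mul_cycle A P Aᵀ).symm] at h0
  simpa [smul_eq_mul] using h0

lemma eigSup_nonneg {M : Matrix (Fin p) (Fin p) ℝ} (hp : 1 ≤ p) (hM : M.PosSemidef) :
    0 ≤ ⨆ i, hM.1.eigenvalues i := by
  have : Nonempty (Fin p) := ⟨⟨0, by omega⟩⟩
  exact le_trans (hM.eigenvalues_nonneg ⟨0, by omega⟩)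
    (le_ciSup (Set.Finite.bddAbove (Set.finite_range _)) _)

lemma pd_trace_pos {M : Matrix (Fin p) (Fin p) ℝ} (hp : 1 ≤ p) (hM : M.PosDef) :
    0 < M.trace := by
  have : Nonempty (Fin p) := ⟨⟨0, by omega⟩⟩
  rw [trace_eq_sum_eig hM.1]
  exact Finset.sum_pos (fun i _ => hM.eigenvalues_pos i) Finset.univ_nonempty

variable {A P W : Matrix (Fin p) (Fin p) ℝ}

lemma conj_psd {M : Matrix (Fin p) (Fin p) ℝ} (hM : M.PosSemidef)
    (B : Matrix (Fin p) (Fin p) ℝ) : (B * M * Bᵀ).PosSemidef := by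
  have := hM.mul_mul_conjTranspose_same B
  rwa [conjTranspose_eq_transpose_of_trivial] at this

lemma S_posdef (hP : P.PosDef) (hW : W.PosDef) : (A * P * Aᵀ + W).PosDef :=
  Matrix.PosDef.posSemidef_add (conj_psd hP.posSemidef A) hW

lemma pd_symm (hP : P.PosDef) : Pᵀ = P := by
  rw [← conjTranspose_eq_transpose_of_trivial]
  exact hP.1

lemma inv_symm (hP : P.PosDef) : (P⁻¹)ᵀ = P⁻¹ := by
  rw [transpose_nonsing_inv, pd_symm hP]

lemma pi_mul_eq_one (hP : P.PosDef) (hW : W.PosDef) :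
    (P - P * Aᵀ * (A * P * Aᵀ + W)⁻¹ * A * P) * (P⁻¹ + Aᵀ * W⁻¹ * A) = 1 := by
  set S := A * P * Aᵀ + W with hS
  have hSpd : S.PosDef := S_posdef hP hW
  have hPP : P * P⁻¹ = 1 := Matrix.mul_nonsing_inv P hP.det_pos.ne'.isUnit
  have hWW : ∀ X : Matrix (Fin p) (Fin p) ℝ, W * (W⁻¹ * X) = X := fun X => by
    rw [← Matrix.mul_assoc, Matrix.mul_nonsing_inv W hW.det_pos.ne'.isUnit, Matrix.one_mul]
  have hSinv : S⁻¹ * S = 1 := Matrix.nonsing_inv_mul S hSpd.det_pos.ne'.isUnit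
  have e1 : ∀ X : Matrix (Fin p) (Fin p) ℝ,
      S⁻¹ * (A * (P * (Aᵀ * X))) = X - S⁻¹ * (W * X) := by
    intro X
    have h2 : S⁻¹ * (A * P * Aᵀ) = 1 - S⁻¹ * W := by
      have : S⁻¹ * (A * P * Aᵀ + W) = 1 := hSinv
      rw [Matrix.mul_add] at this
      linear_combination (norm := noncomm_ring) this
    calc S⁻¹ * (A * (P * (Aᵀ * X))) = (S⁻¹ * (A * P * Aᵀ)) * X := by noncomm_ring
      _ = (1 - S⁻¹ * W) * X := by rw [h2]
      _ = X - S⁻¹ * (W * X) := by noncomm_ring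
  have expand : (P - P * Aᵀ * S⁻¹ * A * P) * (P⁻¹ + Aᵀ * W⁻¹ * A)
      = P * P⁻¹ + P * (Aᵀ * (W⁻¹ * A)) - P * (Aᵀ * (S⁻¹ * (A * (P * P⁻¹))))
        - P * (Aᵀ * (S⁻¹ * (A * (P * (Aᵀ * (W⁻¹ * A)))))) := by noncomm_ring
  rw [expand, hPP, Matrix.mul_one, e1 (W⁻¹ * A), hWW A]
  noncomm_ring

lemma det_pi_identity (hP : P.PosDef) (hW : W.PosDef) :
    P.det * W.det = (A * P * Aᵀ + W).det * (P - P * Aᵀ * (A * P * Aᵀ + W)⁻¹ * A * P).det := by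
  set S := A * P * Aᵀ + W with hS
  have hSpd : S.PosDef := S_posdef hP hW
  haveI : Invertible P := P.invertibleOfIsUnitDet hP.det_pos.ne'.isUnit
  haveI : Invertible S := S.invertibleOfIsUnitDet hSpd.det_pos.ne'.isUnit
  have h22 := Matrix.det_fromBlocks₂₂ S (A * P) (P * Aᵀ) P
  have h11 := Matrix.det_fromBlocks₁₁ S (A * P) (P * Aᵀ) P
  have hiP : ⅟P = P⁻¹ := invOf_eq_nonsing_inv P
  have hiS : ⅟S = S⁻¹ := invOf_eq_nonsing_inv S
  have e2 : S - A * P * ⅟P * (P * Aᵀ) = W := by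
    rw [hiP]
    have : A * P * P⁻¹ * (P * Aᵀ) = A * (P * P⁻¹) * P * Aᵀ := by noncomm_ring
    rw [this, Matrix.mul_nonsing_inv P hP.det_pos.ne'.isUnit, Matrix.mul_one, hS]
    noncomm_ring
  have e3 : P - P * Aᵀ * ⅟S * (A * P) = P - P * Aᵀ * S⁻¹ * A * P := by
    rw [hiS]; noncomm_ring
  rw [e2] at h22
  rw [e3] at h11
  rw [h22] at h11
  exact h11

lemma pi_posdef (hP : P.PosDef) (hW : W.PosDef) :
    (P - P * Aᵀ * (A * P * Aᵀ + W)⁻¹ * A * P).PosDef := by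
  have hN : (P⁻¹ + Aᵀ * W⁻¹ * A).PosDef := by
    have h1 : (Aᵀ * W⁻¹ * A).PosSemidef := by
      have := conj_psd hW.inv.posSemidef Aᵀ
      rwa [transpose_transpose] at this
    exact hP.inv.add_posSemidef h1
  have h2 : (P⁻¹ + Aᵀ * W⁻¹ * A)⁻¹ = P - P * Aᵀ * (A * P * Aᵀ + W)⁻¹ * A * P :=
    Matrix.inv_eq_left_inv (pi_mul_eq_one hP hW)
  rw [← h2]
  exact hN.inv

lemma K_identity (hP : P.PosDef) (hW : W.PosDef) (K : Matrix (Fin p) (Fin p) ℝ) :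
    (1 - K * A) * P * (1 - K * A)ᵀ + K * W * Kᵀ
      - (P - P * Aᵀ * (A * P * Aᵀ + W)⁻¹ * A * P)
    = (K - P * Aᵀ * (A * P * Aᵀ + W)⁻¹) * (A * P * Aᵀ + W)
        * (K - P * Aᵀ * (A * P * Aᵀ + W)⁻¹)ᵀ := by
  set S := A * P * Aᵀ + W with hS
  have hSpd : S.PosDef := S_posdef hP hW
  have hSu : IsUnit S.det := hSpd.det_pos.ne'.isUnit
  have ht1 : (1 - K * A)ᵀ = 1 - Aᵀ * Kᵀ := by
    rw [transpose_sub, transpose_one, transpose_mul]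
  have ht2 : (K - P * Aᵀ * S⁻¹)ᵀ = Kᵀ - S⁻¹ * (A * P) := by
    rw [transpose_sub, transpose_mul, transpose_mul, transpose_transpose,
      inv_symm hSpd, pd_symm hP]
  rw [ht1, ht2]
  have e1 : S * (S⁻¹ * (A * P)) = A * P := by
    rw [← Matrix.mul_assoc, Matrix.mul_nonsing_inv S hSu, Matrix.one_mul]
  have e2 : S⁻¹ * S = 1 := Matrix.nonsing_inv_mul S hSu
  have expand : (K - P * Aᵀ * S⁻¹) * S * (Kᵀ - S⁻¹ * (A * P))
      = K * S * Kᵀ - K * (S * (S⁻¹ * (A * P))) - P * Aᵀ * (S⁻¹ * S) * Kᵀ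
        + P * Aᵀ * ((S⁻¹ * S) * (S⁻¹ * (A * P))) := by noncomm_ring
  rw [expand, e1, e2]
  rw [hS]
  noncomm_ring

lemma sum_Icc_pred {M : Type*} [AddCommMonoid M] (f : ℕ → M) (n : ℕ) :
    ∑ t ∈ Finset.Icc 1 n, f (t - 1) = ∑ t ∈ Finset.range n, f t := by
  rw [← Finset.Ico_add_one_right_eq_Icc, Finset.sum_Ico_eq_sum_range]
  simp

lemma sum_range_split {M : Type*} [AddCommMonoid M] (f : ℕ → M) (n : ℕ) :
    ∑ t ∈ Finset.range (n + 1), f t = f 0 + ∑ t ∈ Finset.Icc 1 n, f t := by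
  rw [Finset.range_eq_Ico, Finset.sum_eq_sum_Ico_succ_bot (Nat.succ_pos n), ← Finset.Ico_add_one_right_eq_Icc]
  rfl

end Helpers

set_option maxHeartbeats 1000000 in
/-- Feasibility and lower-bound estimate for the time-average `P̄` of a feasible sequence
of the finite-horizon Gaussian SRD program (Lemma 4 of the paper). -/
theorem stmt_11 {p : ℕ} (hp : 1 ≤ p) (n : ℕ)
    (A Sw Sx0 : Matrix (Fin p) (Fin p) ℝ) (hSw : Sw.PosDef) (hSx0 : Sx0.PosDef)
    (D : ℝ) (hD : D > 0)
    (P : ℕ → Matrix (Fin p) (Fin p) ℝ) (hP : ∀ t ≤ n, (P t).PosDef)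
    (h0 : (Sx0 - P 0).PosSemidef)
    (hrec : ∀ t, 1 ≤ t → t ≤ n → (A * P (t - 1) * Aᵀ + Sw - P t).PosSemidef)
    (htr : ∀ t ≤ n, (P t).trace ≤ D)
    (Pbar : Matrix (Fin p) (Fin p) ℝ)
    (hPbar : Pbar = ((n : ℝ) + 1)⁻¹ • ∑ t ∈ Finset.range (n + 1), P t)
    (δ ε : ℝ)
    (hδ : δ = eigMax Sx0 hSx0.1 / ((n : ℝ) + 1))
    (hε : ε = ((n : ℝ) + 1)⁻¹ *
      (((p : ℝ) / 2) *
          Real.log ((eigMax (A * Aᵀ) (isHermitian_mul_transpose_self_real A) * D + Sw.trace) /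
            (p : ℝ)) -
        (1 / 2) * Real.log Sx0.det)) :
    Pbar.PosDef ∧ Pbar.trace ≤ D ∧
      (A * Pbar * Aᵀ + Sw + δ • (1 : Matrix (Fin p) (Fin p) ℝ) - Pbar).PosSemidef ∧
      ((n : ℝ) + 1)⁻¹ *
          ((1 / 2) * Real.log Sx0.det - (1 / 2) * Real.log (P 0).det +
            ∑ t ∈ Finset.Icc 1 n,
              ((1 / 2) * Real.log (A * P (t - 1) * Aᵀ + Sw).det -
                (1 / 2) * Real.log (P t).det)) ≥
        (1 / 2) * Real.log (A * Pbar * Aᵀ + Sw).det - (1 / 2) * Real.log Pbar.det - ε := by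
  classical
  have hp0 : (0 : ℝ) < p := by exact_mod_cast hp
  have hmR : (0 : ℝ) < (n : ℝ) + 1 := by positivity
  have hm0 : ((n : ℝ) + 1) ≠ 0 := hmR.ne'
  set SP := ∑ t ∈ Finset.range (n + 1), P t with hSPdef
  -- Pbar posdef
  have hSPpd : SP.PosDef := by
    rw [hSPdef, Finset.sum_range_succ']
    refine Matrix.PosDef.posSemidef_add
      (psd_sum _ fun i hi => (hP (i + 1) ?_).posSemidef) (hP 0 (by omega))
    have := Finset.mem_range.mp hi; omega
  have hPbarpd : Pbar.PosDef := by
    rw [hPbar]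
    exact pd_smul hSPpd (inv_pos.mpr hmR)
  refine ⟨hPbarpd, ?_, ?_, ?_⟩
  -- trace bound
  · rw [hPbar, trace_smul, smul_eq_mul]
    have h1 : SP.trace ≤ ((n : ℝ) + 1) * D := by
      rw [hSPdef, trace_sum]
      calc ∑ t ∈ Finset.range (n + 1), (P t).trace
          ≤ ∑ t ∈ Finset.range (n + 1), D :=
            Finset.sum_le_sum fun t ht => htr t (by have := Finset.mem_range.mp ht; omega)
        _ = ((n : ℝ) + 1) * D := by
            rw [Finset.sum_const, Finset.card_range, nsmul_eq_mul]; push_cast; ring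
    calc ((n : ℝ) + 1)⁻¹ * SP.trace ≤ ((n : ℝ) + 1)⁻¹ * (((n : ℝ) + 1) * D) :=
          mul_le_mul_of_nonneg_left h1 (by positivity)
      _ = D := by field_simp
  -- recursion feasibility
  · set μ0 := eigMax Sx0 hSx0.1 with hμ0
    set T := (Sx0 - P 0) + (∑ t ∈ Finset.Icc 1 n, (A * P (t - 1) * Aᵀ + Sw - P t))
      + A * P n * Aᵀ + Sw + (μ0 • (1 : Matrix (Fin p) (Fin p) ℝ) - Sx0) with hT
    have hTpsd : T.PosSemidef := by
      refine ((((h0.add (psd_sum _ fun t ht => ?_)).add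
        (conj_psd (hP n le_rfl).posSemidef A)).add hSw.posSemidef).add ?_)
      · have := Finset.mem_Icc.mp ht
        exact hrec t this.1 this.2
      · exact le_eigMax_smul_one hSx0.1
    have hkey : ((n : ℝ) + 1) • (A * Pbar * Aᵀ + Sw + δ • (1 : Matrix (Fin p) (Fin p) ℝ) - Pbar)
        = T := by
      have hPbar' : ((n : ℝ) + 1) • Pbar = SP := by
        rw [hPbar, smul_smul, mul_inv_cancel₀ hm0, one_smul]
      have hδ' : ((n : ℝ) + 1) * δ = μ0 := by
        rw [hδ, hμ0]; field_simp
      have a3 : ∑ x ∈ Finset.range n, P x = SP - P n := by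
        rw [hSPdef, Finset.sum_range_succ]; abel
      have a4 : ∑ x ∈ Finset.Icc 1 n, P x = SP - P 0 := by
        have := sum_range_split P n
        rw [← hSPdef] at this
        rw [this]; abel
      have hs1 : ∑ t ∈ Finset.Icc 1 n, (A * P (t - 1) * Aᵀ + Sw - P t)
          = A * (SP - P n) * Aᵀ + (n : ℝ) • Sw - (SP - P 0) := by
        rw [Finset.sum_sub_distrib, Finset.sum_add_distrib]
        have a1 : ∑ x ∈ Finset.Icc 1 n, A * P (x - 1) * Aᵀ
            = ∑ x ∈ Finset.range n, A * P x * Aᵀ := sum_Icc_pred (fun t => A * P t * Aᵀ) n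
        have a2 : ∑ x ∈ Finset.range n, A * P x * Aᵀ = A * (SP - P n) * Aᵀ := by
          rw [← a3, Finset.mul_sum, Finset.sum_mul]
        have a5 : ∑ _x ∈ Finset.Icc 1 n, Sw = (n : ℝ) • Sw := by
          rw [Finset.sum_const, Nat.card_Icc]
          simp [Nat.cast_smul_eq_nsmul]
        rw [a1, a2, a5, a4]
      have e0 : ((n : ℝ) + 1) • (A * Pbar * Aᵀ) = A * SP * Aᵀ := by
        rw [← hPbar', mul_smul_comm, smul_mul_assoc]
      rw [hT, hs1, smul_sub, smul_add, smul_add, e0, smul_smul, hδ', hPbar']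
      rw [Matrix.mul_sub, Matrix.sub_mul]
      module
    have : (A * Pbar * Aᵀ + Sw + δ • (1 : Matrix (Fin p) (Fin p) ℝ) - Pbar)
        = ((n : ℝ) + 1)⁻¹ • T := by
      rw [← hkey, smul_smul, inv_mul_cancel₀ hm0, one_smul]
    rw [this]
    exact psd_smul hTpsd (by positivity)
  · -- part (iv)
    set m : ℝ := (n : ℝ) + 1 with hmdef
    set c : ℝ := eigMax (A * Aᵀ) (isHermitian_mul_transpose_self_real A) * D + Sw.trace with hcdef
    set Sb := A * Pbar * Aᵀ + Sw with hSbdef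
    have hSbpd : Sb.PosDef := S_posdef hPbarpd hSw
    set Pib := Pbar - Pbar * Aᵀ * Sb⁻¹ * A * Pbar with hPibdef
    have hPibpd : Pib.PosDef := pi_posdef hPbarpd hSw
    set Pi : ℕ → Matrix (Fin p) (Fin p) ℝ :=
      fun t => P t - P t * Aᵀ * (A * P t * Aᵀ + Sw)⁻¹ * A * P t with hPidef
    have hStpd : ∀ t, t ≤ n → (A * P t * Aᵀ + Sw).PosDef := fun t ht => S_posdef (hP t ht) hSw
    have hPipd : ∀ t, t ≤ n → (Pi t).PosDef := fun t ht => pi_posdef (hP t ht) hSw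
    have hIdent : ∀ t, t ≤ n →
        Real.log (P t).det + Real.log Sw.det
          = Real.log (A * P t * Aᵀ + Sw).det + Real.log (Pi t).det := by
      intro t ht
      have h := det_pi_identity (A := A) (hP t ht) hSw
      have h2 := congrArg Real.log h
      rwa [Real.log_mul (hP t ht).det_pos.ne' hSw.det_pos.ne',
        Real.log_mul (hStpd t ht).det_pos.ne' (hPipd t ht).det_pos.ne'] at h2
    have hIdentb : Real.log Pbar.det + Real.log Sw.det
        = Real.log Sb.det + Real.log Pib.det := by
      have h := det_pi_identity (A := A) hPbarpd hSw
      have h2 := congrArg Real.log h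
      rwa [Real.log_mul hPbarpd.det_pos.ne' hSw.det_pos.ne',
        Real.log_mul hSbpd.det_pos.ne' hPibpd.det_pos.ne'] at h2
    -- the average Q of the Π's
    set Q := m⁻¹ • ∑ t ∈ Finset.range (n + 1), Pi t with hQdef
    have hQsumpd : (∑ t ∈ Finset.range (n + 1), Pi t).PosDef := by
      rw [Finset.sum_range_succ']
      refine Matrix.PosDef.posSemidef_add
        (psd_sum _ fun i hi => (hPipd (i + 1) ?_).posSemidef) (hPipd 0 (by omega))
      have := Finset.mem_range.mp hi; omega
    have hQpd : Q.PosDef := pd_smul hQsumpd (inv_pos.mpr hmR)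
    have hQsum : ∑ t ∈ Finset.range (n + 1), Pi t = m • Q := by
      rw [hQdef, smul_smul, mul_inv_cancel₀ hm0, one_smul]
    -- step 1 : Jensen via the affine bound
    have step1 : ∑ t ∈ Finset.range (n + 1), Real.log (Pi t).det ≤ m * Real.log Q.det := by
      have hper : ∀ t ∈ Finset.range (n + 1),
          Real.log (Pi t).det ≤ (Q⁻¹ * Pi t).trace - Real.log Q⁻¹.det - p := fun t ht =>
        logdet_le_key (hPipd t (by have := Finset.mem_range.mp ht; omega)) hQpd.inv
      have hsum := Finset.sum_le_sum hper
      have hT1 : ∑ t ∈ Finset.range (n + 1), (Q⁻¹ * Pi t).trace = m * (p : ℝ) := by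
        rw [← trace_sum, ← Finset.mul_sum, hQsum, mul_smul_comm,
          Matrix.nonsing_inv_mul Q hQpd.det_pos.ne'.isUnit, trace_smul]
        simp [smul_eq_mul]
      have hinv : Real.log Q⁻¹.det = - Real.log Q.det := by
        rw [det_nonsing_inv, Ring.inverse_eq_inv', Real.log_inv]
      have hrhs : ∑ t ∈ Finset.range (n + 1), ((Q⁻¹ * Pi t).trace - Real.log Q⁻¹.det - (p : ℝ))
          = m * Real.log Q.det := by
        rw [Finset.sum_sub_distrib, Finset.sum_sub_distrib, hT1, Finset.sum_const,
          Finset.sum_const, Finset.card_range, nsmul_eq_mul, nsmul_eq_mul, hinv, hmdef]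
        push_cast; ring
      exact hsum.trans hrhs.le
    -- step 2 : concavity of Π and monotonicity
    set Kb := Pbar * Aᵀ * Sb⁻¹ with hKbdef
    have hbar : Pib = (1 - Kb * A) * Pbar * (1 - Kb * A)ᵀ + Kb * Sw * Kbᵀ := by
      have h := K_identity (A := A) hPbarpd hSw Kb
      rw [← hSbdef, ← hPibdef, ← hKbdef, sub_self, Matrix.zero_mul, transpose_zero,
        Matrix.mul_zero] at h
      exact (sub_eq_zero.mp h).symm
    have hdiff : ∀ t, t ≤ n →
        ((1 - Kb * A) * P t * (1 - Kb * A)ᵀ + Kb * Sw * Kbᵀ - Pi t).PosSemidef := by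
      intro t ht
      show ((1 - Kb * A) * P t * (1 - Kb * A)ᵀ + Kb * Sw * Kbᵀ
        - (P t - P t * Aᵀ * (A * P t * Aᵀ + Sw)⁻¹ * A * P t)).PosSemidef
      rw [K_identity (hP t ht) hSw Kb]
      exact conj_psd (hStpd t ht).posSemidef _
    have hPbarm : m • Pbar = SP := by
      rw [hPbar, smul_smul, mul_inv_cancel₀ hm0, one_smul]
    have hPibQ : (Pib - Q).PosSemidef := by
      have hsum2 : m • (Pib - Q)
          = ∑ t ∈ Finset.range (n + 1),
              ((1 - Kb * A) * P t * (1 - Kb * A)ᵀ + Kb * Sw * Kbᵀ - Pi t) := by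
        rw [Finset.sum_sub_distrib, Finset.sum_add_distrib, hQsum]
        have e1 : ∑ t ∈ Finset.range (n + 1), (1 - Kb * A) * P t * (1 - Kb * A)ᵀ
            = (1 - Kb * A) * SP * (1 - Kb * A)ᵀ := by
          rw [hSPdef, Finset.mul_sum, Finset.sum_mul]
        have e2 : ∑ _t ∈ Finset.range (n + 1), Kb * Sw * Kbᵀ = m • (Kb * Sw * Kbᵀ) := by
          rw [Finset.sum_const, Finset.card_range, hmdef, ← Nat.cast_smul_eq_nsmul ℝ]
          push_cast; ring_nf
        rw [e1, e2, smul_sub, hbar, smul_add]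
        have e3 : m • ((1 - Kb * A) * Pbar * (1 - Kb * A)ᵀ) = (1 - Kb * A) * SP * (1 - Kb * A)ᵀ := by
          rw [← hPbarm, mul_smul_comm, smul_mul_assoc]
        rw [e3]
      have heq : Pib - Q = m⁻¹ • (∑ t ∈ Finset.range (n + 1),
          ((1 - Kb * A) * P t * (1 - Kb * A)ᵀ + Kb * Sw * Kbᵀ - Pi t)) := by
        rw [← hsum2, smul_smul, inv_mul_cancel₀ hm0, one_smul]
      rw [heq]
      refine psd_smul (psd_sum _ fun t ht => hdiff t ?_) (by positivity)
      have := Finset.mem_range.mp ht; omega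
    have step2 : Real.log Q.det ≤ Real.log Pib.det := logdet_mono hQpd hPibpd hPibQ
    -- step 3 : bound on log det (S n)
    have hμnn : 0 ≤ eigMax (A * Aᵀ) (isHermitian_mul_transpose_self_real A) := by
      have hpsd : (A * Aᵀ).PosSemidef := by
        have := Matrix.posSemidef_self_mul_conjTranspose A
        rwa [conjTranspose_eq_transpose_of_trivial] at this
      exact eigSup_nonneg hp hpsd
    have hAAt : ((eigMax (A * Aᵀ) (isHermitian_mul_transpose_self_real A)) •
        (1 : Matrix (Fin p) (Fin p) ℝ) - A * Aᵀ).PosSemidef :=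
      le_eigMax_smul_one (isHermitian_mul_transpose_self_real A)
    have hAtA := transpose_mul_self_le hμnn hAAt
    have htrSn : (A * P n * Aᵀ + Sw).trace ≤ c := by
      rw [trace_add, hcdef]
      have h1 : (A * P n * Aᵀ).trace
          ≤ eigMax (A * Aᵀ) (isHermitian_mul_transpose_self_real A) * (P n).trace :=
        trace_conj_le (hP n le_rfl).posSemidef hAtA
      have h2 : eigMax (A * Aᵀ) (isHermitian_mul_transpose_self_real A) * (P n).trace
          ≤ eigMax (A * Aᵀ) (isHermitian_mul_transpose_self_real A) * D :=
        mul_le_mul_of_nonneg_left (htr n le_rfl) hμnn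
      linarith
    have hc0 : 0 < c := by
      rw [hcdef]
      have := pd_trace_pos hp hSw
      nlinarith [mul_nonneg hμnn hD.le]
    have step3 : Real.log (A * P n * Aᵀ + Sw).det ≤ (p : ℝ) * Real.log (c / p) := by
      have hS0 : (((p : ℝ) / c) • (1 : Matrix (Fin p) (Fin p) ℝ)).PosDef :=
        pd_smul Matrix.PosDef.one (by positivity)
      have h := logdet_le_key (hStpd n le_rfl) hS0
      rw [Matrix.smul_mul, Matrix.one_mul, trace_smul, smul_eq_mul] at h
      have hdet1 : (((p : ℝ) / c) • (1 : Matrix (Fin p) (Fin p) ℝ)).det = ((p : ℝ) / c) ^ p := by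
        rw [Matrix.det_smul, det_one, mul_one, Fintype.card_fin]
      rw [hdet1, Real.log_pow] at h
      have h2 : (p : ℝ) / c * (A * P n * Aᵀ + Sw).trace ≤ (p : ℝ) := by
        have h3 := mul_le_mul_of_nonneg_left htrSn (le_of_lt (div_pos hp0 hc0))
        have h4 : (p : ℝ) / c * c = (p : ℝ) := by field_simp
        linarith
      have h5 : Real.log ((p : ℝ) / c) = - Real.log (c / (p : ℝ)) := by
        rw [← Real.log_inv, inv_div]
      rw [h5] at h
      push_cast at h
      nlinarith [h, h2]
    -- assemble
    have step12 : ∑ t ∈ Finset.range (n + 1), Real.log (Pi t).det ≤ m * Real.log Pib.det :=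
      le_trans step1 (mul_le_mul_of_nonneg_left step2 (by positivity))
    have f1 : ∑ t ∈ Finset.Icc 1 n,
          (1 / 2 * Real.log (A * P (t - 1) * Aᵀ + Sw).det - 1 / 2 * Real.log (P t).det)
        = ∑ t ∈ Finset.range n, (1 / 2 * Real.log (A * P t * Aᵀ + Sw).det)
          - (∑ t ∈ Finset.range (n + 1), (1 / 2 * Real.log (P t).det)
            - 1 / 2 * Real.log (P 0).det) := by
      rw [Finset.sum_sub_distrib]
      congr 1
      · exact sum_Icc_pred (fun t => 1 / 2 * Real.log (A * P t * Aᵀ + Sw).det) n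
      · rw [sum_range_split (fun t => 1 / 2 * Real.log (P t).det) n]; ring
    have f2 : ∑ t ∈ Finset.range n, (1 / 2 * Real.log (A * P t * Aᵀ + Sw).det)
        = ∑ t ∈ Finset.range (n + 1), (1 / 2 * Real.log (A * P t * Aᵀ + Sw).det)
          - 1 / 2 * Real.log (A * P n * Aᵀ + Sw).det := by
      rw [Finset.sum_range_succ]; ring
    have f3 : ∑ t ∈ Finset.range (n + 1), (1 / 2 * Real.log (A * P t * Aᵀ + Sw).det)
          - ∑ t ∈ Finset.range (n + 1), (1 / 2 * Real.log (P t).det)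
        = m * (1 / 2 * Real.log Sw.det)
          - 1 / 2 * ∑ t ∈ Finset.range (n + 1), Real.log (Pi t).det := by
      rw [← Finset.sum_sub_distrib]
      have hcg : ∀ t ∈ Finset.range (n + 1),
          1 / 2 * Real.log (A * P t * Aᵀ + Sw).det - 1 / 2 * Real.log (P t).det
            = 1 / 2 * Real.log Sw.det - 1 / 2 * Real.log (Pi t).det := by
        intro t ht
        have := hIdent t (by have := Finset.mem_range.mp ht; omega)
        linarith
      rw [Finset.sum_congr rfl hcg, Finset.sum_sub_distrib, Finset.sum_const,
        Finset.card_range, nsmul_eq_mul, Finset.mul_sum, hmdef]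
      push_cast
      ring
    have hmε : m * ε = (p : ℝ) / 2 * Real.log (c / p) - 1 / 2 * Real.log Sx0.det := by
      rw [hε, hmdef]
      field_simp
    have hIdentb' : m * Real.log Sw.det - m * Real.log Pib.det
        = m * Real.log Sb.det - m * Real.log Pbar.det := by
      linear_combination m * hIdentb
    have hred : ∀ x y : ℝ, m * y ≤ x → y ≤ m⁻¹ * x := by
      intro x y h
      calc y = m⁻¹ * (m * y) := by field_simp
        _ ≤ m⁻¹ * x := mul_le_mul_of_nonneg_left h (by positivity)
    rw [ge_iff_le]
    apply hred
    rw [f1]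
    obtain ⟨SL, hSL⟩ : ∃ x, ∑ t ∈ Finset.range (n + 1), Real.log (Pi t).det = x := ⟨_, rfl⟩
    obtain ⟨lQ, hlQ⟩ : ∃ x, Real.log Pib.det = x := ⟨_, rfl⟩
    obtain ⟨lSb, hlSb⟩ : ∃ x, Real.log Sb.det = x := ⟨_, rfl⟩
    obtain ⟨lc, hlc⟩ : ∃ x, Real.log (c / (p : ℝ)) = x := ⟨_, rfl⟩
    obtain ⟨mm, hmm⟩ : ∃ x, m = x := ⟨_, rfl⟩
    rw [hSL, hlQ, hmm] at step12
    rw [hlc] at step3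
    rw [hSL, hmm] at f3
    rw [hlc, hmm] at hmε
    rw [hlQ, hlSb, hmm] at hIdentb'
    rw [hlSb, hmm]
    linarith [f2, f3, step12, step3, hmε, hIdentb']
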